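/- Let q > 2 be odd. Then the density of n ≤ x with f_{2,q}(n+1) = f_{2,q}(n) tends to (q-1)/q as x → ∞. -/

import Mathlib

open Filter Real

/-- Number of representations of `n` as a sum of distinct terms of the form `p^a * q^b`. -/
noncomputable def fpq (p q n : ℕ) : ℕ :=
  Set.ncard {S : Finset ℕ | (∀ k ∈ S, ∃ a b : ℕ, k = p ^ a * q ^ b) ∧ S.sum id = n}

namespace Stmt7Aux

lemma pow2_inj : Function.Injective (fun a : ℕ => 2 ^ a) :=
  Nat.pow_right_injective le_rfl

/-- Powers of two below `2^a`. -/
def P (a : ℕ) : Finset ℕ := (Finset.range a).image (fun e => 2 ^ e)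

lemma mem_P {k a : ℕ} : k ∈ P a ↔ ∃ e < a, k = 2 ^ e := by
  simp [P, eq_comm]

lemma two_pow_mem_P {e a : ℕ} : 2 ^ e ∈ P a ↔ e < a := by
  simp only [mem_P]
  constructor
  · rintro ⟨e', he', h⟩
    rw [pow2_inj h.symm] at he'; exact he'
  · exact fun h => ⟨e, h, rfl⟩

lemma P_sum (a : ℕ) : (P a).sum id + 1 = 2 ^ a := by
  induction a with
  | zero => simp [P]
  | succ a ih =>
    have h1 : P (a + 1) = insert (2 ^ a) (P a) := by
      simp [P, Finset.range_add_one]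
    have h2 : 2 ^ a ∉ P a := by simp [two_pow_mem_P]
    rw [h1, Finset.sum_insert h2]
    simp only [id] at *
    rw [pow_succ]
    omega

lemma exS (S : Finset ℕ) : ∃ a, 2 ^ a ∉ S := by
  refine ⟨S.sup id, fun h => ?_⟩
  have := Finset.le_sup (f := id) h
  simp only [id] at this
  exact absurd this (not_le.mpr (Nat.lt_two_pow_self))

/-- Least `a` with `2^a ∉ S`. -/
noncomputable def idx (S : Finset ℕ) : ℕ := Nat.find (exS S)

lemma idx_not_mem (S : Finset ℕ) : 2 ^ idx S ∉ S := Nat.find_spec (exS S)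

lemma mem_of_lt_idx {S : Finset ℕ} {e : ℕ} (h : e < idx S) : 2 ^ e ∈ S :=
  not_not.mp (Nat.find_min (exS S) h)

lemma P_subset (S : Finset ℕ) : P (idx S) ⊆ S := by
  intro k hk
  obtain ⟨e, he, rfl⟩ := mem_P.mp hk
  exact mem_of_lt_idx he

/-- The "add one with binary carries" map. -/
noncomputable def step (S : Finset ℕ) : Finset ℕ := insert (2 ^ idx S) (S \ P (idx S))

open Classical in
/-- The "subtract one with binary borrows" map. -/
noncomputable def unstep (T : Finset ℕ) : Finset ℕ :=
  if h : ∃ a, 2 ^ a ∈ T then (T.erase (2 ^ Nat.find h)) ∪ P (Nat.find h) else T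

lemma pow_not_mem_sdiff (S : Finset ℕ) : 2 ^ idx S ∉ S \ P (idx S) := by
  simp [idx_not_mem S]

lemma step_sum (S : Finset ℕ) : (step S).sum id = S.sum id + 1 := by
  have h1 := Finset.sum_sdiff (f := id) (P_subset S)
  have h2 := P_sum (idx S)
  have h3 : (step S).sum id = 2 ^ idx S + (S \ P (idx S)).sum id := by
    rw [step, Finset.sum_insert (pow_not_mem_sdiff S)]; rfl
  simp only [Function.id_def] at *
  omega

lemma unstep_step (S : Finset ℕ) : unstep (step S) = S := by
  have hmem : ∃ a, 2 ^ a ∈ step S := ⟨idx S, Finset.mem_insert_self _ _⟩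
  have hfind : Nat.find hmem = idx S := by
    rw [Nat.find_eq_iff]
    refine ⟨Finset.mem_insert_self _ _, fun e he hmem' => ?_⟩
    rcases Finset.mem_insert.mp hmem' with h | h
    · exact absurd (pow2_inj h) (Nat.ne_of_lt he)
    · exact (Finset.mem_sdiff.mp h).2 (two_pow_mem_P.mpr he)
  rw [unstep]
  rw [dif_pos hmem, hfind, step, Finset.erase_insert (pow_not_mem_sdiff S),
    Finset.sdiff_union_of_subset (P_subset S)]

lemma step_injective : Function.Injective step :=
  Function.LeftInverse.injective unstep_step


section Unstep

variable {T : Finset ℕ} (h : ∃ a, 2 ^ a ∈ T)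
include h

open Classical in
lemma unstep_def : unstep T = (T.erase (2 ^ Nat.find h)) ∪ P (Nat.find h) := by
  rw [unstep, dif_pos h]

lemma find_not_mem_lt {e : ℕ} (he : e < Nat.find h) : 2 ^ e ∉ T := Nat.find_min h he

lemma unstep_disj : Disjoint (T.erase (2 ^ Nat.find h)) (P (Nat.find h)) := by
  rw [Finset.disjoint_right]
  intro k hk
  obtain ⟨e, he, rfl⟩ := mem_P.mp hk
  exact fun hmem => find_not_mem_lt h he (Finset.mem_of_mem_erase hmem)

lemma find_mem : 2 ^ Nat.find h ∈ T := Nat.find_spec h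

lemma unstep_sum : (unstep T).sum id + 1 = T.sum id := by
  rw [unstep_def h, Finset.sum_union (unstep_disj h)]
  have h1 := Finset.sum_erase_add T id (find_mem h)
  have h2 := P_sum (Nat.find h)
  simp only [Function.id_def] at *
  omega

lemma idx_unstep : idx (unstep T) = Nat.find h := by
  rw [idx, Nat.find_eq_iff]
  constructor
  · rw [unstep_def h, Finset.mem_union]
    rintro (hmem | hmem)
    · exact absurd rfl (Finset.ne_of_mem_erase hmem)
    · exact absurd (two_pow_mem_P.mp hmem) (lt_irrefl _)
  · intro e he hmem
    exact hmem (by rw [unstep_def h]; exact Finset.mem_union_right _ (two_pow_mem_P.mpr he))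

lemma step_unstep : step (unstep T) = T := by
  rw [step, idx_unstep h, unstep_def h,
    Finset.union_sdiff_cancel_right (unstep_disj h),
    Finset.insert_erase (find_mem h)]

end Unstep


def Rset (q n : ℕ) : Set (Finset ℕ) :=
  {S | (∀ k ∈ S, ∃ a b : ℕ, k = 2 ^ a * q ^ b) ∧ S.sum id = n}

lemma fpq_eq (q n : ℕ) : fpq 2 q n = (Rset q n).ncard := rfl

lemma Rset_finite (q n : ℕ) : (Rset q n).Finite := by
  apply Set.Finite.subset (Finset.finite_toSet ((Finset.range (n + 1)).powerset))
  intro S hS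
  simp only [Finset.coe_powerset, Set.mem_preimage, Set.mem_powerset_iff]
  intro k hk
  have h1 : id k ≤ S.sum id := Finset.single_le_sum (fun i _ => Nat.zero_le _) hk
  rw [hS.2] at h1
  simp only [id] at h1
  exact Finset.mem_coe.mpr (Finset.mem_range.mpr (by omega))

lemma step_mem_Rset {q n : ℕ} {S : Finset ℕ} (hS : S ∈ Rset q n) :
    step S ∈ Rset q (n + 1) := by
  refine ⟨?_, by rw [step_sum, hS.2]⟩
  intro k hk
  rcases Finset.mem_insert.mp hk with rfl | hk
  · exact ⟨idx S, 0, by simp⟩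
  · exact hS.1 k (Finset.mem_sdiff.mp hk).1

lemma unstep_mem_Rset {q n : ℕ} {T : Finset ℕ} (hT : T ∈ Rset q (n + 1))
    (h : ∃ a, 2 ^ a ∈ T) : unstep T ∈ Rset q n := by
  constructor
  · intro k hk
    rw [unstep_def h, Finset.mem_union] at hk
    rcases hk with hk | hk
    · exact hT.1 k (Finset.mem_of_mem_erase hk)
    · obtain ⟨e, _, rfl⟩ := mem_P.mp hk
      exact ⟨e, 0, by simp⟩
  · have := unstep_sum h
    rw [hT.2] at this
    omega

lemma exists_bin (m : ℕ) :
    ∃ S : Finset ℕ, (∀ k ∈ S, ∃ a, k = 2 ^ a) ∧ S.sum id = m := by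
  induction m using Nat.strong_induction_on with
  | _ m ih =>
    rcases Nat.eq_zero_or_pos m with rfl | hm
    · exact ⟨∅, by simp, by simp⟩
    · set a := Nat.log 2 m with ha
      have h1 : 2 ^ a ≤ m := Nat.pow_log_le_self 2 hm.ne'
      have h2 : m < 2 ^ (a + 1) := Nat.lt_pow_succ_log_self one_lt_two m
      have hpos : 0 < 2 ^ a := Nat.pow_pos (by norm_num)
      obtain ⟨S, hS, hsum⟩ := ih (m - 2 ^ a) (by omega)
      have hp2 : 2 ^ (a + 1) = 2 ^ a + 2 ^ a := by rw [pow_succ]; ring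
      have hnot : 2 ^ a ∉ S := by
        intro hmem
        have hle : id (2 ^ a) ≤ S.sum id :=
          Finset.single_le_sum (fun i _ => Nat.zero_le _) hmem
        rw [hsum] at hle
        simp only [id] at hle
        omega
      refine ⟨insert (2 ^ a) S, ?_, ?_⟩
      · intro k hk
        rcases Finset.mem_insert.mp hk with rfl | hk
        exacts [⟨a, rfl⟩, hS k hk]
      · rw [Finset.sum_insert hnot]
        simp only [Function.id_def] at *
        omega

lemma key (q : ℕ) (hq : 2 < q) (hodd : Odd q) (n : ℕ) :
    (fpq 2 q (n + 1) = fpq 2 q n ↔ ¬ q ∣ (n + 1)) := by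
  classical
  set D : Set (Finset ℕ) := {T | T ∈ Rset q (n + 1) ∧ ∀ k ∈ T, q ∣ k} with hD
  have hnotdvd : ∀ a : ℕ, ¬ q ∣ 2 ^ a := by
    intro a hdvd
    have hc : Nat.Coprime q (2 ^ a) := (Nat.Coprime.pow_left a hodd.coprime_two_left).symm
    have := hc.eq_one_of_dvd hdvd
    omega
  have hsplit : Rset q (n + 1) = step '' Rset q n ∪ D := by
    apply Set.Subset.antisymm
    · intro T hT
      by_cases hall : ∀ k ∈ T, q ∣ k
      · exact Or.inr ⟨hT, hall⟩
      · push_neg at hall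
        obtain ⟨k, hk, hkq⟩ := hall
        obtain ⟨a, b, rfl⟩ := hT.1 k hk
        have hb : b = 0 := by
          by_contra hb
          exact hkq ((dvd_pow_self q hb).mul_left _)
        subst hb
        simp only [pow_zero, mul_one] at hk
        have h : ∃ a, 2 ^ a ∈ T := ⟨a, hk⟩
        exact Or.inl ⟨unstep T, unstep_mem_Rset hT h, step_unstep h⟩
    · rintro T (⟨S, hS, rfl⟩ | hT)
      · exact step_mem_Rset hS
      · exact hT.1
  have hdisj : Disjoint (step '' Rset q n) D := by
    rw [Set.disjoint_left]
    rintro T ⟨S, _, rfl⟩ hTD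
    exact hnotdvd (idx S) (hTD.2 _ (Finset.mem_insert_self _ _))
  have hfin1 : (step '' Rset q n).Finite := (Rset_finite q n).image _
  have hfinD : D.Finite := (Rset_finite q (n + 1)).subset (fun T hT => hT.1)
  have hcard : fpq 2 q (n + 1) = fpq 2 q n + D.ncard := by
    rw [fpq_eq, fpq_eq, hsplit, Set.ncard_union_eq hdisj hfin1 hfinD,
      Set.ncard_image_of_injective _ step_injective]
  by_cases hdvd : q ∣ (n + 1)
  · simp only [hdvd, not_true, iff_false]
    have hDne : D.Nonempty := by
      obtain ⟨S, hS, hsum⟩ := exists_bin ((n + 1) / q)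
      refine ⟨S.image (· * q), ⟨⟨?_, ?_⟩, ?_⟩⟩
      · intro k hk
        obtain ⟨s, hs, rfl⟩ := Finset.mem_image.mp hk
        obtain ⟨a, rfl⟩ := hS s hs
        exact ⟨a, 1, by ring⟩
      · have hinj : ∀ x ∈ S, ∀ y ∈ S, x * q = y * q → x = y := fun x _ y _ hxy =>
          Nat.eq_of_mul_eq_mul_right (by omega) hxy
        rw [Finset.sum_image hinj]
        simp only [Function.id_def] at *
        rw [← Finset.sum_mul, hsum, Nat.div_mul_cancel hdvd]
      · intro k hk
        obtain ⟨s, _, rfl⟩ := Finset.mem_image.mp hk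
        exact dvd_mul_left q s
    have : 0 < D.ncard := (Set.ncard_pos hfinD).mpr hDne
    omega
  · simp only [hdvd, not_false_iff, iff_true]
    have hDe : D = ∅ := by
      rw [Set.eq_empty_iff_forall_notMem]
      rintro T ⟨hT, hall⟩
      apply hdvd
      rw [← hT.2]
      exact Finset.dvd_sum (fun k hk => hall k hk)
    rw [hcard, hDe, Set.ncard_empty]
    omega


lemma count (q : ℕ) (hq : 2 < q) (x : ℕ) :
    ((Finset.Icc 1 x).filter (fun n => ¬ q ∣ (n + 1))).card = x - (x + 1) / q := by
  induction x with
  | zero =>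
    have : (1 : ℕ) / q = 0 := Nat.div_eq_of_lt (by omega)
    simp [this]
  | succ x ih =>
    have hle3 : (x + 1) / q ≤ (x + 1) / 3 := Nat.div_le_div_left hq (by norm_num)
    have hIcc : Finset.Icc 1 (x + 1) = insert (x + 1) (Finset.Icc 1 x) := by
      ext k
      simp only [Finset.mem_Icc, Finset.mem_insert]
      omega
    have hnot : (x + 1) ∉ (Finset.Icc 1 x).filter (fun n => ¬ q ∣ (n + 1)) := by
      simp [Finset.mem_filter]
    have hs := Nat.succ_div (a := x + 1) (b := q)
    rw [hIcc, Finset.filter_insert]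
    by_cases hd : q ∣ (x + 1 + 1)
    · rw [if_neg (by simpa using hd), ih]
      rw [if_pos hd] at hs
      omega
    · rw [if_pos (by simpa using hd), Finset.card_insert_of_notMem hnot, ih]
      rw [if_neg hd] at hs
      omega

lemma limit (q : ℕ) (hq : 2 < q) :
    Filter.Tendsto (fun x : ℕ => ((x - (x + 1) / q : ℕ) : ℝ) / x) Filter.atTop
      (nhds (((q : ℝ) - 1) / q)) := by
  have hq0 : (0 : ℝ) < q := by positivity
  apply tendsto_of_tendsto_of_tendsto_of_le_of_le'
    (g := fun x : ℕ => ((q : ℝ) - 1) / q - 1 / x)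
    (h := fun x : ℕ => ((q : ℝ) - 1) / q + 1 / x)
  · simpa using (tendsto_const_nhds (x := ((q : ℝ) - 1) / q)).sub tendsto_one_div_atTop_nhds_zero_nat
  · simpa using (tendsto_const_nhds (x := ((q : ℝ) - 1) / q)).add tendsto_one_div_atTop_nhds_zero_nat
  · filter_upwards [Filter.eventually_ge_atTop 1] with x hx
    have hx0 : (0 : ℝ) < x := by exact_mod_cast hx
    set d : ℕ := (x + 1) / q with hdd
    have hdle : d ≤ x := by
      have h3 : d ≤ (x + 1) / 3 := Nat.div_le_div_left hq (by norm_num)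
      omega
    have hcast : ((x - d : ℕ) : ℝ) = (x : ℝ) - d := by
      rw [Nat.cast_sub hdle]
    have hd1 : (d : ℝ) * q ≤ (x : ℝ) + 1 := by
      have := Nat.div_mul_le_self (x + 1) q
      exact_mod_cast this
    rw [hcast]
    rw [sub_le_iff_le_add, div_add_div _ _ (ne_of_gt hx0) (ne_of_gt hx0),
      div_le_div_iff₀ hq0 (by positivity)]
    nlinarith [mul_le_mul_of_nonneg_right hd1 (le_of_lt hx0)]
  · filter_upwards [Filter.eventually_ge_atTop 1] with x hx
    have hx0 : (0 : ℝ) < x := by exact_mod_cast hx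
    set d : ℕ := (x + 1) / q with hdd
    have hdle : d ≤ x := by
      have h3 : d ≤ (x + 1) / 3 := Nat.div_le_div_left hq (by norm_num)
      omega
    have hcast : ((x - d : ℕ) : ℝ) = (x : ℝ) - d := by
      rw [Nat.cast_sub hdle]
    have hd2 : (x : ℝ) + 1 < ((d : ℝ) + 1) * q := by
      have h1 := Nat.div_add_mod (x + 1) q
      rw [← hdd] at h1
      have h2 : (x + 1) % q < q := Nat.mod_lt _ (by omega)
      have h3 : (d + 1) * q = q * d + q := by ring
      have : x + 1 < (d + 1) * q := by
        rw [h3]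
        omega
      exact_mod_cast this
    rw [hcast]
    rw [div_add_div _ _ (ne_of_gt hq0) (ne_of_gt hx0), div_le_div_iff₀ (by positivity) (by positivity)]
    nlinarith [mul_le_mul_of_nonneg_right (le_of_lt hd2) (le_of_lt hx0)]

end Stmt7Aux

theorem stmt7 (q : ℕ) (hq : 2 < q) (hodd : Odd q) :
    Filter.Tendsto (fun x : ℕ =>
        (((Finset.Icc 1 x).filter (fun n => fpq 2 q (n + 1) = fpq 2 q n)).card : ℝ) / x)
      Filter.atTop (nhds ((q - 1) / q)) := by
  have hfe : ∀ x : ℕ, (Finset.Icc 1 x).filter (fun n => fpq 2 q (n + 1) = fpq 2 q n)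
      = (Finset.Icc 1 x).filter (fun n => ¬ q ∣ (n + 1)) := fun x =>
    Finset.filter_congr (fun n _ => Stmt7Aux.key q hq hodd n)
  simp only [hfe, Stmt7Aux.count q hq]
  exact Stmt7Aux.limit q hq
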